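/- The path P_6 with 6 edges does not divide the 3-dimensional hypercube Q_3. -/

import Mathlib

open SimpleGraph

/-- `H` divides `G`: the edge set of `G` can be partitioned into edge sets of
subgraphs of `G`, each isomorphic to `H`. -/
def GraphDivides {α β : Type} (H : SimpleGraph α) (G : SimpleGraph β) : Prop :=
  ∃ (ι : Type) (f : ι → G.Subgraph),
    (∀ i, Nonempty (H ≃g (f i).coe)) ∧
    ∀ e ∈ G.edgeSet, ∃! i, e ∈ (f i).edgeSet

/-- The `n`-dimensional hypercube graph. -/
def cube (n : ℕ) : SimpleGraph (Fin n → ZMod 2) where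
  Adj x y := hammingDist x y = 1
  symm := ⟨fun x y h => by rwa [hammingDist_comm]⟩
  loopless := ⟨fun x h => by simp [hammingDist_self] at h⟩

instance : DecidableRel (cube 3).Adj :=
  fun x y => inferInstanceAs (Decidable (hammingDist x y = 1))

instance (n : ℕ) : DecidableRel (pathGraph n).Adj :=
  fun _ _ => decidable_of_iff _ pathGraph_adj.symm

lemma cube3_edge_card : ((cube 3).edgeSet).ncard = 12 := by
  rw [← Nat.card_coe_set_eq, Nat.card_eq_fintype_card, ← Set.toFinset_card]
  decide

lemma cube3_ncard_neighbor (v : Fin 3 → ZMod 2) : ((cube 3).neighborSet v).ncard = 3 := by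
  rw [← Nat.card_coe_set_eq, Nat.card_eq_fintype_card, card_neighborSet_eq_degree]
  revert v; decide

lemma path7_edge : ((pathGraph 7).edgeSet).ncard = 6 := by
  rw [← Nat.card_coe_set_eq, Nat.card_eq_fintype_card, ← Set.toFinset_card]
  decide

lemma path7_odd (u : Fin 7) :
    Odd (Nat.card ((pathGraph 7).neighborSet u)) → u = 0 ∨ u = 6 := by
  rw [Nat.card_eq_fintype_card, card_neighborSet_eq_degree]
  revert u; decide

theorem path6_not_divides_cube3 : ¬ GraphDivides (pathGraph 7) (cube 3) := by
  classical
  rintro ⟨ι, f, hiso, huniq⟩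
  -- every piece has 6 edges
  have hE6 : ∀ i, ((f i).edgeSet).ncard = 6 := by
    intro i
    obtain ⟨e⟩ := hiso i
    rw [← (f i).image_coe_edgeSet_coe,
        Set.ncard_image_of_injective _ (Sym2.map.injective Subtype.val_injective),
        ← Nat.card_coe_set_eq, ← Nat.card_congr e.mapEdgeSet,
        Nat.card_coe_set_eq, path7_edge]
  -- distinct pieces have disjoint edge sets
  have hdisj : ∀ i j : ι, i ≠ j → Disjoint ((f i).edgeSet) ((f j).edgeSet) := by
    intro i j hij
    rw [Set.disjoint_left]
    intro e hei hej
    obtain ⟨k, -, hk⟩ := huniq e ((f i).edgeSet_subset hei)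
    exact hij ((hk i hei).trans (hk j hej).symm)
  -- there cannot be three distinct indices
  have h3 : ∀ i j k : ι, i ≠ j → i ≠ k → j ≠ k → False := by
    intro i j k hij hik hjk
    have hsub : (f i).edgeSet ∪ (f j).edgeSet ∪ (f k).edgeSet ⊆ (cube 3).edgeSet := by
      refine Set.union_subset (Set.union_subset ?_ ?_) ?_ <;> exact Subgraph.edgeSet_subset _
    have hcard : ((f i).edgeSet ∪ (f j).edgeSet ∪ (f k).edgeSet).ncard = 18 := by
      rw [Set.ncard_union_eq
            (Set.disjoint_union_left.mpr ⟨hdisj i k hik, hdisj j k hjk⟩)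
            (Set.toFinite _) (Set.toFinite _),
          Set.ncard_union_eq (hdisj i j hij) (Set.toFinite _) (Set.toFinite _),
          hE6, hE6, hE6]
    have hle := Set.ncard_le_ncard hsub (Set.toFinite _)
    rw [hcard, cube3_edge_card] at hle
    omega
  -- there is at least one index
  have hne : ((cube 3).edgeSet).Nonempty :=
    Set.nonempty_of_ncard_ne_zero (by rw [cube3_edge_card]; omega)
  obtain ⟨e₀, he₀⟩ := hne
  obtain ⟨i₁, -, -⟩ := huniq e₀ he₀
  -- all indices are among two
  have hcover : ∃ i₂ : ι, ∀ i, i = i₁ ∨ i = i₂ := by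
    by_cases hone : ∀ i, i = i₁
    · exact ⟨i₁, fun i => Or.inl (hone i)⟩
    · push_neg at hone
      obtain ⟨i₂, hi₂⟩ := hone
      refine ⟨i₂, fun i => ?_⟩
      by_contra h
      push_neg at h
      exact h3 i₁ i₂ i (Ne.symm hi₂) (Ne.symm h.1) (Ne.symm h.2)
  obtain ⟨i₂, hcov⟩ := hcover
  -- every vertex has odd degree in one of the two pieces
  have hodd : ∀ v, Odd (((f i₁).neighborSet v).ncard) ∨ Odd (((f i₂).neighborSet v).ncard) := by
    intro v
    have hun : (cube 3).neighborSet v = (f i₁).neighborSet v ∪ (f i₂).neighborSet v := by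
      ext w
      constructor
      · intro hw
        obtain ⟨i, hi, -⟩ := huniq s(v, w) ((cube 3).mem_edgeSet.mpr hw)
        rcases hcov i with h | h <;> subst h
        · exact Or.inl hi
        · exact Or.inr hi
      · rintro (hw | hw) <;> exact (f _).adj_sub hw
    by_cases h12 : i₁ = i₂
    · subst h12
      rw [Set.union_self] at hun
      left
      rw [← hun, cube3_ncard_neighbor]
      exact ⟨1, rfl⟩
    · have hd : Disjoint ((f i₁).neighborSet v) ((f i₂).neighborSet v) := by
        rw [Set.disjoint_left]
        intro w hw1 hw2
        obtain ⟨k, -, hk⟩ := huniq s(v, w) ((cube 3).mem_edgeSet.mpr ((f i₁).adj_sub hw1))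
        exact h12 ((hk i₁ hw1).trans (hk i₂ hw2).symm)
      have hsum : ((f i₁).neighborSet v).ncard + ((f i₂).neighborSet v).ncard = 3 := by
        rw [← Set.ncard_union_eq hd (Set.toFinite _) (Set.toFinite _), ← hun,
          cube3_ncard_neighbor]
      rcases Nat.even_or_odd (((f i₁).neighborSet v).ncard) with h | h
      · right
        rw [Nat.odd_iff]
        rw [Nat.even_iff] at h
        omega
      · exact Or.inl h
  -- each piece has at most two odd-degree vertices
  have hO : ∀ i : ι,
      (Finset.univ.filter (fun v => Odd (((f i).neighborSet v).ncard))).card ≤ 2 := by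
    intro i
    obtain ⟨e⟩ := hiso i
    have hvert : ∀ v, Odd (((f i).neighborSet v).ncard) → v ∈ (f i).verts := by
      intro v hv
      have hne : ((f i).neighborSet v).Nonempty := by
        apply Set.nonempty_of_ncard_ne_zero
        intro h0
        rw [h0] at hv
        have := Nat.odd_iff.mp hv
        omega
      obtain ⟨w, hw⟩ := hne
      exact hw.fst_mem
    set g : (Fin 3 → ZMod 2) → Fin 7 :=
      fun v => if h : v ∈ (f i).verts then e.symm ⟨v, h⟩ else 0 with hg
    have hcardeq : ∀ (v) (h : v ∈ (f i).verts),
        ((f i).neighborSet v).ncard = Nat.card ((pathGraph 7).neighborSet (e.symm ⟨v, h⟩)) := by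
      intro v h
      have h1 := Nat.card_congr (e.mapNeighborSet (e.symm ⟨v, h⟩))
      rw [RelIso.apply_symm_apply] at h1
      have h2 := Nat.card_congr ((f i).coeNeighborSetEquiv ⟨v, h⟩)
      rw [← Nat.card_coe_set_eq, ← h2, ← h1]
    have hmem : ∀ v ∈ Finset.univ.filter (fun v => Odd (((f i).neighborSet v).ncard)),
        g v ∈ ({0, 6} : Finset (Fin 7)) := by
      intro v hv
      rw [Finset.mem_filter] at hv
      have h := hvert v hv.2
      have hodd' : Odd (Nat.card ((pathGraph 7).neighborSet (e.symm ⟨v, h⟩))) := by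
        rw [← hcardeq v h]; exact hv.2
      rcases path7_odd _ hodd' with h0 | h0 <;>
        simp [hg, dif_pos h, h0]
    have hinj : Set.InjOn g
        (Finset.univ.filter (fun v => Odd (((f i).neighborSet v).ncard))) := by
      intro v₁ hv₁ v₂ hv₂ hgeq
      rw [Finset.coe_filter, Set.mem_setOf_eq] at hv₁ hv₂
      have h₁ := hvert v₁ hv₁.2
      have h₂ := hvert v₂ hv₂.2
      rw [hg] at hgeq
      simp only [dif_pos h₁, dif_pos h₂] at hgeq
      exact Subtype.ext_iff.mp (e.symm.injective hgeq)
    calc (Finset.univ.filter (fun v => Odd (((f i).neighborSet v).ncard))).card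
        ≤ ({0, 6} : Finset (Fin 7)).card := Finset.card_le_card_of_injOn g hmem hinj
      _ = 2 := rfl
  -- final counting
  have huniv : (Finset.univ : Finset (Fin 3 → ZMod 2)) ⊆
      Finset.univ.filter (fun v => Odd (((f i₁).neighborSet v).ncard)) ∪
      Finset.univ.filter (fun v => Odd (((f i₂).neighborSet v).ncard)) := by
    intro v _
    rcases hodd v with h | h
    · exact Finset.mem_union_left _ (Finset.mem_filter.mpr ⟨Finset.mem_univ v, h⟩)
    · exact Finset.mem_union_right _ (Finset.mem_filter.mpr ⟨Finset.mem_univ v, h⟩)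
  have h8 : (Finset.univ : Finset (Fin 3 → ZMod 2)).card = 8 := by decide
  have hle := Finset.card_le_card huniv
  have hun := Finset.card_union_le
      (Finset.univ.filter (fun v => Odd (((f i₁).neighborSet v).ncard)))
      (Finset.univ.filter (fun v => Odd (((f i₂).neighborSet v).ncard)))
  have h1 := hO i₁
  have h2 := hO i₂
  omega
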